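/- Let r and n be positive integers. Every r-coloring of the edges of any n-vertex tournament (not necessarily transitive) contains a monochromatic directed path on at least n^{1/r} vertices. -/

import Mathlib

open Relation

section aux

variable {α : Type*} [Fintype α]

/-- `l` is a directed path for relation `R` ending at `v`. -/
def OkList (R : α → α → Prop) (v : α) (l : List α) : Prop :=
  l.Nodup ∧ l.Chain' R ∧ l.getLast? = some v

lemma okList_single (R : α → α → Prop) (v : α) : OkList R v [v] :=
  ⟨List.nodup_singleton v, List.isChain_singleton v, rfl⟩

/-- Length of the longest `R`-path ending at `v`. -/
noncomputable def gfun (R : α → α → Prop) (v : α) : ℕ :=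
  sSup {k | ∃ l : List α, OkList R v l ∧ l.length = k}

lemma gfun_bdd (R : α → α → Prop) (v : α) :
    BddAbove {k | ∃ l : List α, OkList R v l ∧ l.length = k} :=
  ⟨Fintype.card α, fun k hk => by
    obtain ⟨l, hl, rfl⟩ := hk
    exact hl.1.length_le_card⟩

lemma gfun_spec (R : α → α → Prop) (v : α) :
    ∃ l : List α, OkList R v l ∧ l.length = gfun R v := by
  have h1 : (1 : ℕ) ∈ {k | ∃ l : List α, OkList R v l ∧ l.length = k} :=
    ⟨[v], okList_single R v, rfl⟩
  exact Nat.sSup_mem ⟨1, h1⟩ (gfun_bdd R v)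

lemma le_gfun {R : α → α → Prop} {v : α} {l : List α} (h : OkList R v l) :
    l.length ≤ gfun R v :=
  le_csSup (gfun_bdd R v) ⟨l, h, rfl⟩

lemma one_le_gfun (R : α → α → Prop) (v : α) : 1 ≤ gfun R v :=
  le_gfun (okList_single R v)

lemma chain'_reflTransGen {R : α → α → Prop} :
    ∀ {l : List α}, l.Chain' R → ∀ {a v : α}, a ∈ l → l.getLast? = some v →
      ReflTransGen R a v := by
  intro l
  induction l with
  | nil => intro _ a v ha; simp at ha
  | cons b t ih =>
    intro h a v ha hv
    cases t with
    | nil =>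
      simp at ha hv
      subst ha; subst hv
      exact ReflTransGen.refl
    | cons d t' =>
      change List.IsChain R _ at h
      rw [List.isChain_cons_cons] at h
      have hv' : (d :: t').getLast? = some v := by
        simpa using hv
      rcases List.mem_cons.mp ha with rfl | ha
      · exact ReflTransGen.head h.1 (ih h.2 List.mem_cons_self hv')
      · exact ih h.2 ha hv'

lemma gfun_lt {R : α → α → Prop} (hac : ∀ x, ¬ TransGen R x x) {u v : α}
    (huv : R u v) : gfun R u < gfun R v := by
  obtain ⟨l, hl, hlen⟩ := gfun_spec R u
  have hvl : v ∉ l := by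
    intro hmem
    have h1 : ReflTransGen R v u := chain'_reflTransGen hl.2.1 hmem hl.2.2
    exact hac v (TransGen.tail' h1 huv)
  have hok : OkList R v (l ++ [v]) := by
    refine ⟨?_, ?_, by simp⟩
    · rw [List.nodup_append]
      exact ⟨hl.1, List.nodup_singleton v, by simpa using (fun a ha h => hvl (h ▸ ha) : ∀ a ∈ l, ¬a = v)⟩
    · change List.IsChain R _
      rw [List.isChain_append]
      refine ⟨hl.2.1, List.isChain_singleton v, ?_⟩
      intro x hx y hy
      rw [hl.2.2] at hx
      simp at hx hy
      subst hx; subst hy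
      exact huv
  have h2 := le_gfun hok
  simp at h2
  omega

lemma gfun_lt_of_transGen {R : α → α → Prop} (hac : ∀ x, ¬ TransGen R x x)
    {u v : α} (h : TransGen R u v) : gfun R u < gfun R v := by
  induction h with
  | single h => exact gfun_lt hac h
  | tail _ h2 ih => exact lt_trans ih (gfun_lt hac h2)

end aux

lemma acyc_insert {α : Type*} {R : α → α → Prop} {u v : α}
    (hac : ∀ x, ¬ TransGen R x x) (hvu : ¬ ReflTransGen R v u)
    (x : α) (hx : TransGen (fun a b => R a b ∨ (a = u ∧ b = v)) x x) : False := by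
  have key : ∀ {a b : α}, TransGen (fun a b => R a b ∨ (a = u ∧ b = v)) a b →
      TransGen R a b ∨ (ReflTransGen R a u ∧ ReflTransGen R v b) := by
    intro a b h
    induction h with
    | single h =>
      rcases h with h | ⟨rfl, rfl⟩
      · exact Or.inl (TransGen.single h)
      · exact Or.inr ⟨ReflTransGen.refl, ReflTransGen.refl⟩
    | tail h1 h2 ih =>
      rcases h2 with h2 | ⟨rfl, rfl⟩
      · rcases ih with ih | ⟨ha, hb⟩
        · exact Or.inl (ih.tail h2)
        · exact Or.inr ⟨ha, hb.tail h2⟩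
      · rcases ih with ih | ⟨ha, hb⟩
        · exact Or.inr ⟨ih.to_reflTransGen, ReflTransGen.refl⟩
        · exact absurd hb hvu
  rcases key hx with h | ⟨h1, h2⟩
  · exact hac x h
  · exact hvu (h2.trans h1)

/-- Every `r`-coloring of the edges of any `n`-vertex tournament contains a
monochromatic directed path on at least `n^(1/r)` vertices, for positive integers
`r, n`. The tournament is given by a relation `o` such that for distinct vertices
exactly one orientation holds; a directed path is a duplicate-free list of vertices
with consecutive vertices joined by forward edges, and it is monochromatic if all
its edges get the same color. -/
theorem stmt_12 (r n : ℕ) (hr : 0 < r) (hn : 0 < n)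
    (o : Fin n → Fin n → Prop)
    (hirr : ∀ u, ¬ o u u)
    (ho : ∀ u v : Fin n, u ≠ v → (o u v ↔ ¬ o v u))
    (c : Fin n → Fin n → Fin r) :
    ∃ q : Fin r, ∃ l : List (Fin n), l.Nodup ∧
      l.Chain' (fun x y => o x y ∧ c x y = q) ∧
      (n : ℝ) ^ ((1 : ℝ) / (r : ℝ)) ≤ (l.length : ℝ) := by
  classical
  -- for each color pick a maximal acyclic subdigraph
  have hE : ∀ i : Fin r, ∃ E : Finset (Fin n × Fin n),
      (∀ p ∈ E, o p.1 p.2 ∧ c p.1 p.2 = i) ∧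
      (∀ x, ¬ TransGen (fun a b => (a, b) ∈ E) x x) ∧
      (∀ u v : Fin n, o u v → c u v = i → (u, v) ∉ E →
        ReflTransGen (fun a b => (a, b) ∈ E) v u) := by
    intro i
    set Di : Finset (Fin n × Fin n) :=
      Finset.univ.filter (fun p => o p.1 p.2 ∧ c p.1 p.2 = i) with hDi
    set 𝒜 : Finset (Finset (Fin n × Fin n)) :=
      Di.powerset.filter
        (fun E => ∀ x, ¬ TransGen (fun a b => (a, b) ∈ E) x x) with h𝒜
    have hne : 𝒜.Nonempty := by
      refine ⟨∅, ?_⟩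
      rw [h𝒜, Finset.mem_filter]
      refine ⟨Finset.empty_mem_powerset _, ?_⟩
      intro x hx
      have key : ∀ a b : Fin n,
          TransGen (fun a b => (a, b) ∈ (∅ : Finset (Fin n × Fin n))) a b → False := by
        intro a b h
        induction h with
        | single h => simp at h
        | tail _ h _ => simp at h
      exact key x x hx
    obtain ⟨E, hEmem, hEmax⟩ := 𝒜.exists_max_image Finset.card hne
    rw [h𝒜, Finset.mem_filter, Finset.mem_powerset] at hEmem
    refine ⟨E, ?_, hEmem.2, ?_⟩
    · intro p hp
      have := hEmem.1 hp
      rw [hDi, Finset.mem_filter] at this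
      exact this.2
    · intro u v houv hc hnot
      by_contra hvu
      have hacins := fun x hx => acyc_insert hEmem.2 hvu x hx
      have hins : insert (u, v) E ∈ 𝒜 := by
        rw [h𝒜, Finset.mem_filter, Finset.mem_powerset]
        constructor
        · intro p hp
          rcases Finset.mem_insert.mp hp with rfl | hp
          · rw [hDi, Finset.mem_filter]
            exact ⟨Finset.mem_univ _, houv, hc⟩
          · exact hEmem.1 hp
        · intro x hx
          refine hacins x ?_
          refine TransGen.mono ?_ x x hx
          intro a b hab
          rcases Finset.mem_insert.mp hab with h | h
          · exact Or.inr ⟨congrArg Prod.fst h, congrArg Prod.snd h⟩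
          · exact Or.inl h
      have := hEmax _ hins
      rw [Finset.card_insert_of_notMem hnot] at this
      omega
  choose E hE1 hE2 hE3 using hE
  -- the bound L
  set A : Set ℕ := {k | ∃ q : Fin r, ∃ l : List (Fin n), l.Nodup ∧
      l.Chain' (fun x y => o x y ∧ c x y = q) ∧ l.length = k} with hA
  have hAbdd : BddAbove A := by
    refine ⟨n, fun k hk => ?_⟩
    obtain ⟨q, l, hl1, _, rfl⟩ := hk
    simpa using hl1.length_le_card
  have h1A : (1 : ℕ) ∈ A :=
    ⟨⟨0, hr⟩, [⟨0, hn⟩], List.nodup_singleton _, List.isChain_singleton _, rfl⟩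
  have hAne : A.Nonempty := ⟨1, h1A⟩
  set L : ℕ := sSup A with hL
  have hLmem : L ∈ A := Nat.sSup_mem hAne hAbdd
  have hL1 : 1 ≤ L := le_csSup hAbdd h1A
  -- gfun (fun a b => (a, b) ∈ E i) v ∈ [1, L]
  have hgL : ∀ i v, gfun (fun a b => (a, b) ∈ E i) v ∈ Finset.Icc 1 L := by
    intro i v
    rw [Finset.mem_Icc]
    refine ⟨one_le_gfun _ v, ?_⟩
    obtain ⟨l, hl, hlen⟩ := gfun_spec (fun a b => (a, b) ∈ E i) v
    rw [← hlen]
    refine le_csSup hAbdd ⟨i, l, hl.1, ?_, rfl⟩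
    exact hl.2.1.imp (fun a b hab => hE1 i (a, b) hab)
  -- injectivity of the tuple map
  have hinj : Function.Injective (fun v : Fin n => fun i : Fin r => gfun (fun a b => (a, b) ∈ E i) v) := by
    intro u v huvF
    by_contra hne
    have key : ∀ u v : Fin n, o u v → gfun (fun a b => (a, b) ∈ E (c u v)) u ≠ gfun (fun a b => (a, b) ∈ E (c u v)) v := by
      intro u v houv
      have hune : u ≠ v := by rintro rfl; exact hirr u houv
      by_cases hmem : (u, v) ∈ E (c u v)
      · exact ne_of_lt (gfun_lt (hE2 _) hmem)
      · have hrtg := hE3 (c u v) u v houv rfl hmem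
        have htg : TransGen (fun a b => (a, b) ∈ E (c u v)) v u := by
          rcases (Relation.reflTransGen_iff_eq_or_transGen.mp hrtg) with h | h
          · exact absurd h hune
          · exact h
        exact (ne_of_lt (gfun_lt_of_transGen (hE2 _) htg)).symm
    have houv : o u v ∨ o v u := by
      by_cases h : o u v
      · exact Or.inl h
      · exact Or.inr ((ho u v hne).not_left.mp h)
    rcases houv with h | h
    · exact key u v h (congrFun huvF (c u v))
    · exact key v u h (congrFun huvF (c v u)).symm
  -- counting: n ≤ L ^ r
  have hcount : n ≤ L ^ r := by
    have h1 : (Finset.univ : Finset (Fin n)).card ≤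
        (Fintype.piFinset (fun _ : Fin r => Finset.Icc 1 L)).card := by
      refine Finset.card_le_card_of_injOn (fun v => fun i => gfun (fun a b => (a, b) ∈ E i) v) ?_ ?_
      · intro v _
        rw [Finset.mem_coe, Fintype.mem_piFinset]
        exact fun i => hgL i v
      · exact fun a _ b _ hab => hinj hab
    rw [Finset.card_univ, Fintype.card_fin] at h1
    rw [Fintype.card_piFinset] at h1
    simpa using h1
  -- extract witness path and conclude
  obtain ⟨q, l, hl1, hl2, hllen⟩ := hLmem
  refine ⟨q, l, hl1, hl2, ?_⟩
  rw [hllen]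
  have hcast : (n : ℝ) ≤ (L : ℝ) ^ (r : ℕ) := by exact_mod_cast hcount
  have hrne : (r : ℝ) ≠ 0 := Nat.cast_ne_zero.mpr hr.ne'
  calc (n : ℝ) ^ ((1 : ℝ) / (r : ℝ))
      ≤ ((L : ℝ) ^ (r : ℕ)) ^ ((1 : ℝ) / (r : ℝ)) := by
        apply Real.rpow_le_rpow (by positivity) hcast (by positivity)
    _ = (L : ℝ) := by
        rw [← Real.rpow_natCast (L : ℝ) r, ← Real.rpow_mul (by positivity)]
        rw [mul_one_div, div_self hrne, Real.rpow_one]
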